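/- Let M be a real symmetric N×N matrix with eigenvalues λ_1, …, λ_N, let c be a real number, and let B be a positive semidefinite real matrix with B² = (M − cI)². Then the trace of B equals Σ_{j=1}^N |λ_j − c|. In particular, for a graph G of order N with σ self-loops and adjacency matrix A, the sum of the vertex energies over all vertices equals the energy of G: Σ_{i=1}^N E(v_i) = Σ_{j=1}^N |λ_j − σ/N|. -/

import Mathlib

/-- If `M` is a real symmetric `N × N` matrix with eigenvalues `λ₁, …, λ_N`, `c` is
real, and `B` is positive semidefinite with `B² = (M - cI)²`, then
`trace B = ∑ j, |λ j - c|`. In particular, for a graph with `σ` self-loops the sum of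
the vertex energies equals the energy of the graph. -/
theorem trace_abs_eq_sum_abs_eigenvalues (N : ℕ) (M B : Matrix (Fin N) (Fin N) ℝ)
    (c : ℝ) (hM : M.IsHermitian) (hB : B.PosSemidef)
    (hBsq : B ^ 2 = (M - c • 1) ^ 2) :
    B.trace = ∑ j, |hM.eigenvalues j - c| := by
  set U : Matrix (Fin N) (Fin N) ℝ := (hM.eigenvectorUnitary : Matrix (Fin N) (Fin N) ℝ) with hUdef
  have hU : U ∈ Matrix.unitaryGroup (Fin N) ℝ := hM.eigenvectorUnitary.2
  have hUU : star U * U = 1 := hU.1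
  have hUU' : U * star U = 1 := hU.2
  set C : Matrix (Fin N) (Fin N) ℝ :=
    U * Matrix.diagonal (fun j => |hM.eigenvalues j - c|) * star U with hC
  have hCps : C.PosSemidef := by
    refine Matrix.PosSemidef.mul_mul_conjTranspose_same ?_ U
    exact Matrix.posSemidef_diagonal_iff.mpr fun j => abs_nonneg _
  have hMdiag : M - c • 1 =
      U * Matrix.diagonal (fun j => hM.eigenvalues j - c) * star U := by
    have hspec := hM.spectral_theorem
    have h1 : (c • 1 : Matrix (Fin N) (Fin N) ℝ) = U * (c • 1) * star U := by
      rw [Matrix.mul_smul, mul_one, Matrix.smul_mul, hUU']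
    calc M - c • 1
        = U * Matrix.diagonal (RCLike.ofReal ∘ hM.eigenvalues) * star U
          - U * (c • 1) * star U := by
            simp only [Unitary.conjStarAlgAut_apply, Unitary.coe_star, ← hUdef] at hspec
            rw [← hspec, ← h1]
      _ = U * Matrix.diagonal (fun j => hM.eigenvalues j - c) * star U := by
          rw [← Matrix.sub_mul, ← Matrix.mul_sub]
          have : Matrix.diagonal (RCLike.ofReal ∘ hM.eigenvalues) - (c • 1 : Matrix (Fin N) (Fin N) ℝ)
              = Matrix.diagonal (fun j => hM.eigenvalues j - c) := by
            ext i j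
            by_cases h : i = j <;>
              simp [h, Matrix.diagonal_apply, Matrix.one_apply, Matrix.sub_apply]
          rw [this]
  have hCsq : C ^ 2 = (M - c • 1) ^ 2 := by
    have key : ∀ d : Fin N → ℝ, (U * Matrix.diagonal d * star U) ^ 2
        = U * Matrix.diagonal (fun j => d j * d j) * star U := by
      intro d
      rw [pow_two]
      simp only [Matrix.mul_assoc]
      rw [← Matrix.mul_assoc (star U) U, hUU, Matrix.one_mul,
          ← Matrix.mul_assoc (Matrix.diagonal d), Matrix.diagonal_mul_diagonal]
    rw [hMdiag, hC, key, key]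
    simp only [abs_mul_abs_self]
  have hBC : B = C := by
    open scoped MatrixOrder in
    exact (CFC.sq_eq_sq_iff B C hB.nonneg hCps.nonneg).mp (hBsq.trans hCsq.symm)
  rw [hBC, hC, Matrix.trace_mul_comm, ← Matrix.mul_assoc, hUU, Matrix.one_mul,
      Matrix.trace_diagonal]
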